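/- Let c, c' ∈ {0,1}^n share a common subsequence of length n-2. Let w(c) denote the number of ones in 𝟙_{01}(c). If w(c) ≡ w(c') (mod 3), then w(c) = w(c'). -/

import Mathlib

def ind10 (c : List Bool) : List Bool := List.zipWith (fun a b => a && !b) c c.tail

def ind01 (c : List Bool) : List Bool := List.zipWith (fun a b => !a && b) c c.tail

private def w (l : List Bool) : ℕ := (ind01 l).count true

private lemma w_nil : w [] = 0 := rfl

private lemma w_single (a : Bool) : w [a] = 0 := rfl

private lemma w_cons_cons (a b : Bool) (l : List Bool) :
    w (a :: b :: l) = (if (!a && b) then 1 else 0) + w (b :: l) := by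
  simp [w, ind01, List.count_cons]
  split <;> simp [*] <;> omega

private lemma f_le_one (a b : Bool) : (if (!a && b) then 1 else 0) ≤ 1 := by
  split <;> omega

private lemma f_sum (a b h : Bool) :
    (if (!a && b) then 1 else 0) + (if (!b && h) then 1 else 0) ≤ 1 := by
  cases a <;> cases b <;> cases h <;> simp

private lemma f_tri (a b h : Bool) :
    (if (!a && h) then 1 else 0) ≤
      (if (!a && b) then 1 else 0) + (if (!b && h) then 1 else 0) := by
  cases a <;> cases b <;> cases h <;> simp

private lemma w_le_w_cons (a : Bool) (l : List Bool) : w l ≤ w (a :: l) := by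
  cases l with
  | nil => simp [w_nil]
  | cons b t => rw [w_cons_cons]; omega

private lemma w_cons_le (a : Bool) (l : List Bool) : w (a :: l) ≤ 1 + w l := by
  cases l with
  | nil => simp [w_single, w_nil]
  | cons b t => rw [w_cons_cons]; have := f_le_one a b; omega

private lemma w_insert_le (a b : Bool) (l : List Bool) :
    w (a :: b :: l) ≤ 1 + w (a :: l) := by
  cases l with
  | nil => rw [w_cons_cons]; have := f_le_one a b; simp_all [w_single]
  | cons h t =>
      rw [w_cons_cons, w_cons_cons, w_cons_cons]
      have := f_sum a b h
      omega

private lemma w_skip_le (a b : Bool) (l : List Bool) :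
    w (a :: l) ≤ w (a :: b :: l) := by
  cases l with
  | nil => simp [w_single]
  | cons h t =>
      rw [w_cons_cons, w_cons_cons, w_cons_cons]
      have := f_tri a b h
      omega

private lemma w_mono {l₁ l₂ : List Bool} (h : l₁.Sublist l₂) :
    w l₁ ≤ w l₂ ∧ ∀ a, w (a :: l₁) ≤ w (a :: l₂) := by
  induction h with
  | slnil => exact ⟨le_refl _, fun a => le_refl _⟩
  | cons b h ih =>
      refine ⟨ih.1.trans (w_le_w_cons b _), fun a => (ih.2 a).trans (w_skip_le a b _)⟩
  | cons_cons b h ih =>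
      refine ⟨ih.2 b, fun a => ?_⟩
      rw [w_cons_cons, w_cons_cons]
      have := ih.2 b
      omega

private lemma w_upper {l₁ l₂ : List Bool} (h : l₁.Sublist l₂) :
    w l₂ ≤ w l₁ + (l₂.length - l₁.length) ∧
      ∀ a, w (a :: l₂) ≤ w (a :: l₁) + (l₂.length - l₁.length) := by
  induction h with
  | slnil => exact ⟨le_refl _, fun a => by simp⟩
  | @cons l₁ l₂ b h ih =>
      have hlen := h.length_le
      constructor
      · have := w_cons_le b l₂
        have := ih.1
        simp only [List.length_cons]
        omega
      · intro a
        have h1 := w_insert_le a b l₂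
        have h2 := ih.2 a
        simp only [List.length_cons]
        omega
  | @cons_cons l₁ l₂ b h ih =>
      have hlen := h.length_le
      constructor
      · have := ih.2 b
        simp only [List.length_cons]
        omega
      · intro a
        have := ih.2 b
        rw [w_cons_cons, w_cons_cons]
        simp only [List.length_cons]
        omega

theorem stmt12 (n : ℕ) (c c' : List Bool)
    (hc : c.length = n) (hc' : c'.length = n)
    (h : ∃ e : List Bool, e.length = n - 2 ∧ e.Sublist c ∧ e.Sublist c')
    (hmod : (ind01 c).count true ≡ (ind01 c').count true [MOD 3]) :
    (ind01 c).count true = (ind01 c').count true := by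
  obtain ⟨e, he, h1, h2⟩ := h
  have m1 := (w_mono h1).1
  have m2 := (w_mono h2).1
  have u1 := (w_upper h1).1
  have u2 := (w_upper h2).1
  rw [hc, he] at u1
  rw [hc', he] at u2
  have hmod' : w c % 3 = w c' % 3 := hmod
  show w c = w c'
  omega
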